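/- Let p : ℝ^d → ℝ be continuous and compactly supported. Suppose A and A' belong to the same connected component of {x : p(x) ≥ λᵢ} for each i in a sequence with λᵢ ≤ λᵢ₊₁ for all i. Then A and A' belong to the same connected component of {x : p(x) ≥ λ₀}, where λ₀ = sup_i λᵢ. -/

import Mathlib

open Metric Set

abbrev Esp (d : ℕ) := EuclideanSpace ℝ (Fin d)

/-- `A` and `A'` lie in one (common) connected component of `F`. -/
def sameComp {X : Type*} [TopologicalSpace X] (F A A' : Set X) : Prop :=
  ∃ x ∈ F, A ⊆ connectedComponentIn F x ∧ A' ⊆ connectedComponentIn F x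

lemma isClosed_connectedComponentIn' {X : Type*} [TopologicalSpace X] {F : Set X}
    (hF : IsClosed F) (x : X) : IsClosed (connectedComponentIn F x) := by
  by_cases hx : x ∈ F
  · have h1 : IsPreconnected (closure (connectedComponentIn F x)) :=
      isPreconnected_connectedComponentIn.closure
    have h2 : closure (connectedComponentIn F x) ⊆ F :=
      closure_minimal (connectedComponentIn_subset F x) hF
    have h3 : x ∈ closure (connectedComponentIn F x) :=
      subset_closure (mem_connectedComponentIn hx)
    exact isClosed_of_closure_subset (h1.subset_connectedComponentIn h3 h2)
  · rw [connectedComponentIn_eq_empty hx]; exact isClosed_empty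

lemma isPreconnected_iInter_of_antitone {X : Type*} [TopologicalSpace X] [T2Space X]
    {C : ℕ → Set X} (hcomp : ∀ i, IsCompact (C i)) (hconn : ∀ i, IsPreconnected (C i))
    (hanti : Antitone C) : IsPreconnected (⋂ i, C i) := by
  intro u v hu hv hcover hKu hKv
  by_contra hempty
  set K := ⋂ i, C i with hK
  have hnotboth : ∀ x ∈ K, ¬(x ∈ u ∧ x ∈ v) := fun x hxK hx => hempty ⟨x, hxK, hx⟩
  have hKcl : IsClosed K := isClosed_iInter fun i => (hcomp i).isClosed
  have hKcp : IsCompact K := (hcomp 0).of_isClosed_subset hKcl (iInter_subset _ 0)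
  have hAcp : IsCompact (K \ v) := hKcp.diff hv
  have hBcp : IsCompact (K \ u) := hKcp.diff hu
  have hKAB : K ⊆ (K \ v) ∪ (K \ u) := by
    intro x hx
    rcases hcover hx with h | h
    · exact Or.inl ⟨hx, fun hxv => hnotboth x hx ⟨h, hxv⟩⟩
    · exact Or.inr ⟨hx, fun hxu => hnotboth x hx ⟨hxu, h⟩⟩
  have hABdisj : Disjoint (K \ v) (K \ u) := by
    rw [Set.disjoint_left]
    rintro x ⟨hxK, hxv⟩ ⟨-, hxu⟩
    rcases hcover hxK with h | h
    · exact hxu h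
    · exact hxv h
  obtain ⟨U, V, hU, hV, hAU, hBV, hUV⟩ :=
    SeparatedNhds.of_isCompact_isCompact hAcp hBcp hABdisj
  have hCn : ∃ n, C n ⊆ U ∪ V := by
    by_contra hno
    push_neg at hno
    have hanti' : Antitone fun n => C n \ (U ∪ V) :=
      fun i j hij => diff_subset_diff_left (hanti hij)
    have hD : (⋂ n, C n \ (U ∪ V)).Nonempty :=
      IsCompact.nonempty_iInter_of_directed_nonempty_isCompact_isClosed _
        hanti'.directed_ge
        (fun n => Set.diff_nonempty.2 (hno n))
        (fun n => (hcomp n).diff (hU.union hV))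
        (fun n => ((hcomp n).isClosed).sdiff (hU.union hV))
    obtain ⟨x, hx⟩ := hD
    rw [mem_iInter] at hx
    have hxK : x ∈ K := mem_iInter.2 fun i => ((hx i).1)
    rcases hKAB hxK with h | h
    · exact (hx 0).2 (Or.inl (hAU h))
    · exact (hx 0).2 (Or.inr (hBV h))
  obtain ⟨n, hn⟩ := hCn
  have hKCn : K ⊆ C n := iInter_subset _ n
  obtain ⟨xa, hxa⟩ := hKu
  obtain ⟨xb, hxb⟩ := hKv
  have hxaA : xa ∈ K \ v := ⟨hxa.1, fun hxv => hnotboth xa hxa.1 ⟨hxa.2, hxv⟩⟩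
  have hxbB : xb ∈ K \ u := ⟨hxb.1, fun hxu => hnotboth xb hxb.1 ⟨hxu, hxb.2⟩⟩
  obtain ⟨z, hz⟩ := hconn n U V hU hV hn
    ⟨xa, hKCn hxa.1, hAU hxaA⟩ ⟨xb, hKCn hxb.1, hBV hxbB⟩
  exact Set.disjoint_left.1 hUV hz.2.1 hz.2.2

theorem stmt1 (d : ℕ) (p : EuclideanSpace ℝ (Fin d) → ℝ)
    (hp : Continuous p) (hsupp : HasCompactSupport p)
    (l : ℕ → ℝ) (hmono : ∀ i, l i ≤ l (i + 1)) (hbdd : BddAbove (Set.range l))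
    (A A' : Set (EuclideanSpace ℝ (Fin d))) (hA : A.Nonempty) (hA' : A'.Nonempty)
    (hsame : ∀ i, sameComp {x | l i ≤ p x} A A') :
    sameComp {x | (⨆ i, l i) ≤ p x} A A' := by
  classical
  set L := ⨆ i, l i with hLdef
  have hlmono : Monotone l := monotone_nat_of_le_succ hmono
  obtain ⟨a, ha⟩ := hA
  set F : ℕ → Set (Esp d) := fun i => {x | l i ≤ p x} with hFdef
  have hFcl : ∀ i, IsClosed (F i) := fun i => isClosed_le continuous_const hp
  have hFanti : Antitone F := fun i j hij x hx => le_trans (hlmono hij) hx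
  -- components at the point a
  have hAC : ∀ i, A ⊆ connectedComponentIn (F i) a ∧ A' ⊆ connectedComponentIn (F i) a := by
    intro i
    obtain ⟨x, hx, h1, h2⟩ := hsame i
    have hax : a ∈ connectedComponentIn (F i) x := h1 ha
    rw [connectedComponentIn_eq hax] at h1 h2
    exact ⟨h1, h2⟩
  set C : ℕ → Set (Esp d) := fun i => connectedComponentIn (F i) a with hCdef
  have hCF : ∀ i, C i ⊆ F i := fun i => connectedComponentIn_subset _ _
  have haF : ∀ i, a ∈ F i := fun i => hCF i ((hAC i).1 ha)
  have haC : ∀ i, a ∈ C i := fun i => mem_connectedComponentIn (haF i)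
  have hCconn : ∀ i, IsPreconnected (C i) := fun i => isPreconnected_connectedComponentIn
  have hCanti : Antitone C := fun i j hij =>
    (hCconn j).subset_connectedComponentIn (haC j) ((hCF j).trans (hFanti hij))
  have hCcl : ∀ i, IsClosed (C i) := fun i => isClosed_connectedComponentIn' (hFcl i) a
  have hsupF0 : ∀ x : Esp d, (∀ i, x ∈ F i) → L ≤ p x := fun x hx => ciSup_le fun i => hx i
  -- it suffices to exhibit one preconnected set
  suffices h : ∃ S : Set (Esp d), IsPreconnected S ∧ S ⊆ {x | L ≤ p x} ∧ A ⊆ S ∧ A' ⊆ S ∧ a ∈ S by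
    obtain ⟨S, hSconn, hSF, hSA, hSA', haS⟩ := h
    exact ⟨a, hSF haS, hSA.trans (hSconn.subset_connectedComponentIn haS hSF),
      hSA'.trans (hSconn.subset_connectedComponentIn haS hSF)⟩
  have hsubC : A ⊆ ⋂ i, C i := fun x hx => mem_iInter.2 fun i => (hAC i).1 hx
  have hsubC' : A' ⊆ ⋂ i, C i := fun x hx => mem_iInter.2 fun i => (hAC i).2 hx
  have hCsubF0 : (⋂ i, C i) ⊆ {x | L ≤ p x} := fun x hx =>
    hsupF0 x fun i => hCF i (mem_iInter.1 hx i)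
  rcases Nat.lt_or_ge d 2 with hd | hd
  · -- low dimension : the intersection of the components is preconnected
    refine ⟨⋂ i, C i, ?_, hCsubF0, hsubC, hsubC', mem_iInter.2 haC⟩
    interval_cases d
    · -- dimension 0 : subsingleton
      have hsub : Subsingleton (Esp 0) := ⟨fun x y => PiLp.ext fun i => i.elim0⟩
      exact Set.Subsingleton.isPreconnected fun x _ y _ => Subsingleton.elim x y
    · -- dimension 1 : transfer to ℝ and use order-connectedness
      let e : Esp 1 ≃ₜ ℝ :=
        (EuclideanSpace.equiv (Fin 1) ℝ).toHomeomorph.trans (Homeomorph.funUnique (Fin 1) ℝ)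
      have h1 : ∀ i, OrdConnected (e '' C i) := fun i =>
        ((hCconn i).image e e.continuous.continuousOn).ordConnected
      have h2 : OrdConnected (e '' ⋂ i, C i) := by
        rw [Set.image_iInter e.bijective]
        exact ordConnected_iInter h1
      have h3 : IsPreconnected (e '' ⋂ i, C i) := h2.isPreconnected
      have h4 := h3.image e.symm e.symm.continuous.continuousOn
      rwa [← Set.image_comp, Homeomorph.symm_comp_self, Set.image_id] at h4
  · -- dimension at least 2
    by_cases hbound : ∃ N, Bornology.IsBounded (C N)
    · -- some component is bounded : nested compact argument on the tail
      obtain ⟨N, hN⟩ := hbound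
      set D : ℕ → Set (Esp d) := fun i => C (N + i) with hDdef
      have hDanti : Antitone D := fun i j hij => hCanti (by omega)
      have hDcomp : ∀ i, IsCompact (D i) := fun i =>
        Metric.isCompact_of_isClosed_isBounded (hCcl (N + i))
          (hN.subset (hCanti (Nat.le_add_right N i)))
      refine ⟨⋂ i, D i, isPreconnected_iInter_of_antitone hDcomp (fun i => hCconn (N + i))
        hDanti, ?_, ?_, ?_, mem_iInter.2 fun i => haC (N + i)⟩
      · intro x hx
        refine ciSup_le fun i => le_trans (hlmono (Nat.le_add_left i N)) ?_
        exact hCF (N + i) (mem_iInter.1 hx i)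
      · exact fun x hx => mem_iInter.2 fun i => (hAC (N + i)).1 hx
      · exact fun x hx => mem_iInter.2 fun i => (hAC (N + i)).2 hx
    · -- every component is unbounded
      push_neg at hbound
      have hl0 : ∀ i, l i ≤ 0 := by
        intro i
        by_contra hli
        push_neg at hli
        refine hbound i (hsupp.isBounded.subset ((hCF i).trans fun x hx =>
          subset_tsupport p fun h0 => ?_))
        have hx' : l i ≤ p x := hx
        rw [h0] at hx'
        linarith
      have hL0 : L ≤ 0 := ciSup_le hl0
      obtain ⟨R, hR0, hRsupp⟩ : ∃ R : ℝ, 0 < R ∧ tsupport p ⊆ closedBall 0 R := by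
        obtain ⟨R, hR⟩ := hsupp.isBounded.subset_closedBall 0
        exact ⟨max R 1, lt_of_lt_of_le one_pos (le_max_right _ _),
          hR.trans (closedBall_subset_closedBall (le_max_left _ _))⟩
      have hout : ∀ x : Esp d, R < ‖x‖ → p x = 0 := by
        intro x hx
        refine image_eq_zero_of_notMem_tsupport fun hmem => ?_
        have := hRsupp hmem
        rw [mem_closedBall_zero_iff] at this
        exact absurd hx this.not_gt
      set U : Set (Esp d) := {x | R < ‖x‖} with hUdef
      have hUF : ∀ i, U ⊆ F i := fun i x hx => le_trans (hl0 i) (hout x hx).ge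
      have hUF0 : U ⊆ {x | L ≤ p x} := fun x hx => le_trans hL0 (hout x hx).ge
      -- U is preconnected (d ≥ 2)
      have hrank : 1 < Module.rank ℝ (Esp d) := by
        rw [← Module.finrank_eq_rank, finrank_euclideanSpace_fin]
        exact_mod_cast hd
      have hUconn : IsPreconnected U := by
        have himg : U = (fun q : ℝ × Esp d => q.1 • q.2) '' (Ioi R ×ˢ sphere (0 : Esp d) 1) := by
          ext x
          constructor
          · intro hx
            have hx1 : R < ‖x‖ := hx
            have hx0 : x ≠ 0 := fun h => by
              rw [h, norm_zero] at hx1; linarith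
            refine ⟨⟨‖x‖, ‖x‖⁻¹ • x⟩, ⟨hx1, ?_⟩, ?_⟩
            · simp [norm_smul, inv_mul_cancel₀ (norm_ne_zero_iff.2 hx0)]
            · simp [smul_smul, mul_inv_cancel₀ (norm_ne_zero_iff.2 hx0)]
          · rintro ⟨⟨t, y⟩, ⟨ht, hy⟩, rfl⟩
            have ht' : R < t := ht
            have hy' : ‖y‖ = 1 := by simpa using hy
            have : ‖t • y‖ = t := by
              rw [norm_smul, hy', mul_one, Real.norm_eq_abs,
                abs_of_pos (lt_trans hR0 ht')]
            simpa [hUdef, this] using ht'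
        rw [himg]
        have hprod : IsPreconnected (Ioi R ×ˢ sphere (0 : Esp d) 1) :=
          isPreconnected_Ioi.prod (isPreconnected_sphere hrank 0 1)
        exact hprod.image _ (continuous_fst.smul continuous_snd).continuousOn
      have hUsubC : ∀ i, U ⊆ C i := by
        intro i
        obtain ⟨y, hyC, hyU⟩ : ∃ y, y ∈ C i ∧ y ∈ U := by
          by_contra hcon
          push_neg at hcon
          refine hbound i ((Metric.isBounded_closedBall (x := (0:Esp d)) (r := R)).subset ?_)
          intro x hx
          rw [mem_closedBall_zero_iff]
          exact not_lt.1 fun h => hcon x hx h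
        have := hUconn.subset_connectedComponentIn hyU ((hUF i).trans (subset_refl _))
        rwa [← connectedComponentIn_eq (show y ∈ C i from hyC)] at this
      -- the retraction onto the closed ball of radius R + 1
      set r : Esp d → Esp d := fun x => ((R + 1) / max (R + 1) ‖x‖) • x with hrdef
      have hmaxpos : ∀ x : Esp d, 0 < max (R + 1) ‖x‖ := fun x =>
        lt_of_lt_of_le (by linarith) (le_max_left _ _)
      have hrcont : Continuous r := by
        exact (continuous_const.div (continuous_const.max continuous_norm)
          fun x => (hmaxpos x).ne').smul continuous_id
      have hr_small : ∀ x : Esp d, ‖x‖ ≤ R + 1 → r x = x := by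
        intro x hx
        rw [hrdef]
        simp only [max_eq_left hx, div_self (by linarith : R + 1 ≠ 0), one_smul]
      have hr_big : ∀ x : Esp d, R + 1 ≤ ‖x‖ → ‖r x‖ = R + 1 := by
        intro x hx
        have hxpos : (0:ℝ) < ‖x‖ := by linarith
        show ‖((R + 1) / max (R + 1) ‖x‖) • x‖ = R + 1
        rw [max_eq_right hx, norm_smul, Real.norm_eq_abs,
          abs_of_pos (div_pos (by linarith) hxpos), div_mul_cancel₀ _ hxpos.ne']
      set G : ℕ → Set (Esp d) := fun i => C i ∩ closedBall 0 (R + 1) with hGdef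
      have hGeq : ∀ i, G i = r '' C i := by
        intro i
        apply Subset.antisymm
        · rintro x ⟨hxC, hxB⟩
          exact ⟨x, hxC, hr_small x (mem_closedBall_zero_iff.1 hxB)⟩
        · rintro x ⟨y, hyC, rfl⟩
          rcases le_or_gt ‖y‖ (R + 1) with hy | hy
          · rw [hr_small y hy]
            exact ⟨hyC, mem_closedBall_zero_iff.2 hy⟩
          · have hnorm : ‖r y‖ = R + 1 := hr_big y hy.le
            refine ⟨hUsubC i ?_, mem_closedBall_zero_iff.2 hnorm.le⟩
            show R < ‖r y‖
            rw [hnorm]; linarith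
      have hGcomp : ∀ i, IsCompact (G i) :=
        fun i => (isCompact_closedBall (0:Esp d) (R + 1)).inter_left (hCcl i)
      have hGconn : ∀ i, IsPreconnected (G i) := by
        intro i
        rw [hGeq i]
        exact (hCconn i).image r hrcont.continuousOn
      have hGanti : Antitone G := fun i j hij =>
        inter_subset_inter_left _ (hCanti hij)
      -- a point on the sphere of radius R+1
      set x₀ : Esp d := EuclideanSpace.single (⟨0, by omega⟩ : Fin d) (R + 1) with hx₀def
      have hx₀norm : ‖x₀‖ = R + 1 := by
        rw [hx₀def, EuclideanSpace.norm_single, Real.norm_eq_abs, abs_of_pos (by linarith)]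
      have hx₀U : x₀ ∈ U := by
        show R < ‖x₀‖
        rw [hx₀norm]; linarith
      have hx₀G : ∀ i, x₀ ∈ G i :=
        fun i => ⟨hUsubC i hx₀U, mem_closedBall_zero_iff.2 hx₀norm.le⟩
      set K : Set (Esp d) := ⋂ i, G i with hKdef
      have hKconn : IsPreconnected K :=
        isPreconnected_iInter_of_antitone hGcomp hGconn hGanti
      have hx₀K : x₀ ∈ K := mem_iInter.2 hx₀G
      have hCK : ∀ x : Esp d, (∀ i, x ∈ C i) → x ∈ K ∪ U := by
        intro x hx
        rcases le_or_gt ‖x‖ (R + 1) with h | h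
        · exact Or.inl (mem_iInter.2 fun i => ⟨hx i, mem_closedBall_zero_iff.2 h⟩)
        · exact Or.inr (show R < ‖x‖ by linarith)
      refine ⟨K ∪ U, IsPreconnected.union x₀ hx₀K hx₀U hKconn hUconn, ?_, ?_, ?_, ?_⟩
      · rintro x (hx | hx)
        · exact hCsubF0 (mem_iInter.2 fun i => (mem_iInter.1 hx i).1)
        · exact hUF0 hx
      · exact fun x hx => hCK x fun i => (hAC i).1 hx
      · exact fun x hx => hCK x fun i => (hAC i).2 hx
      · exact hCK a haC
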